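/- Suppose nonnegative reals (x_t) satisfy x_{t+1} ≤ β(t+1-t_b)·x_{t_b} + γw for times t in batch b (running over consecutive batches with start times t_b, batch lengths τ_b non-decreasing), where β : ℕ → ℝ is non-increasing, nonnegative, β(0)=1, and r := (τ_1/τ_0)·β(τ_0) < 1, with τ_{b+1}/τ_b·β(τ_b) non-increasing in b. Then the weighted sums satisfy: for all b ≥ 1, H(τ_b)·x_{t_b} ≤ r^b · H(τ_0)·x_{t_0} + H(τ_b)·γw/(1-β(τ_1)), where H(n) = ∑_{i=0}^{n-1} β(i). Consequently ∑_{b=0}^{B-1} H(τ_b)·x_{t_b} ≤ H(τ_0)x_{t_0}/(1-r) + (γw/(1-β(τ_1)))·∑_{b=1}^{B-1} H(τ_b). -/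

import Mathlib

open Finset

theorem weighted_sum_between_breaks
    (β : ℕ → ℝ) (hβmono : Antitone β) (hβnonneg : ∀ i, 0 ≤ β i) (hβ0 : β 0 = 1)
    (γ w : ℝ) (hγ : 0 ≤ γ) (hw : 0 ≤ w)
    (τ : ℕ → ℕ) (hτpos : ∀ b, 0 < τ b) (hτmono : Monotone τ)
    (hratio : ∀ b, ((τ (b + 2) : ℝ) / (τ (b + 1))) * β (τ (b + 1)) ≤
      ((τ (b + 1) : ℝ) / (τ b)) * β (τ b))
    (hr : ((τ 1 : ℝ) / (τ 0)) * β (τ 0) < 1)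
    (t : ℕ → ℕ) (ht : ∀ b, t (b + 1) = t b + τ b)
    (x : ℕ → ℝ) (hx : ∀ s, 0 ≤ x s)
    (hcontr : ∀ b, x (t (b + 1)) ≤ β (τ b) * x (t b) + γ * w)
    (H : ℕ → ℝ) (hH : ∀ n, H n = ∑ i ∈ Finset.range n, β i) :
    (∀ b, 1 ≤ b →
      H (τ b) * x (t b) ≤
        (((τ 1 : ℝ) / (τ 0)) * β (τ 0)) ^ b * (H (τ 0) * x (t 0)) +
          H (τ b) * (γ * w / (1 - β (τ 1)))) ∧
    (∀ B : ℕ,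
      ∑ b ∈ Finset.range B, H (τ b) * x (t b) ≤
        H (τ 0) * x (t 0) / (1 - ((τ 1 : ℝ) / (τ 0)) * β (τ 0)) +
          (γ * w / (1 - β (τ 1))) * ∑ b ∈ Finset.Icc 1 (B - 1), H (τ b)) := by
  set r : ℝ := ((τ 1 : ℝ) / (τ 0)) * β (τ 0) with hrdef
  set C : ℝ := γ * w / (1 - β (τ 1)) with hCdef
  -- basic facts
  have hτR : ∀ b, (0:ℝ) < (τ b : ℝ) := fun b => by exact_mod_cast hτpos b
  have hr0 : 0 ≤ r := by
    apply mul_nonneg (div_nonneg (by positivity) (by positivity)) (hβnonneg _)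
  have hτ01 : (1:ℝ) ≤ (τ 1 : ℝ) / (τ 0) := by
    rw [le_div_iff₀ (hτR 0)]
    have := hτmono (Nat.zero_le 1)
    simp only [one_mul]
    exact_mod_cast this
  have hβτ0r : β (τ 0) ≤ r := by
    calc β (τ 0) = 1 * β (τ 0) := (one_mul _).symm
    _ ≤ ((τ 1 : ℝ) / (τ 0)) * β (τ 0) := by
        apply mul_le_mul_of_nonneg_right hτ01 (hβnonneg _)
  have hβτ1r : β (τ 1) ≤ r := le_trans (hβmono (hτmono (Nat.zero_le 1))) hβτ0r
  have hβτ1lt : β (τ 1) < 1 := lt_of_le_of_lt hβτ1r hr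
  have h1mβ : 0 < 1 - β (τ 1) := by linarith
  have hCnonneg : 0 ≤ C := div_nonneg (mul_nonneg hγ hw) (le_of_lt h1mβ)
  have hγwC : γ * w ≤ C := by
    rw [hCdef, le_div_iff₀ h1mβ]
    nlinarith [mul_nonneg hγ hw, hβnonneg (τ 1)]
  have hCeq : β (τ 1) * C + γ * w = C := by
    have hne : 1 - β (τ 1) ≠ 0 := ne_of_gt h1mβ
    rw [hCdef, mul_div_assoc', div_add' _ _ _ hne, div_left_inj' hne]
    ring
  have hHnonneg : ∀ n, 0 ≤ H n := fun n => by
    rw [hH]; exact Finset.sum_nonneg (fun i _ => hβnonneg i)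
  have hHpos : ∀ b, 0 < H (τ b) := by
    intro b
    rw [hH]
    have h1 : β 0 ≤ ∑ i ∈ Finset.range (τ b), β i :=
      Finset.single_le_sum (fun i _ => hβnonneg i) (Finset.mem_range.mpr (hτpos b))
    rw [hβ0] at h1; linarith
  have hHmono : ∀ n m, n ≤ m → H n ≤ H m := by
    intro n m hnm
    rw [hH, hH]
    apply Finset.sum_le_sum_of_subset_of_nonneg
    · exact Finset.range_subset_range.mpr hnm
    · exact fun i _ _ => hβnonneg i
  -- key ratio lemma: n ≤ m → n * H m ≤ m * H n
  have hHratio : ∀ n m : ℕ, 0 < n → n ≤ m → (n : ℝ) * H m ≤ (m : ℝ) * H n := by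
    intro n m hn hnm
    have hsplit : H m = H n + ∑ i ∈ Finset.Ico n m, β i := by
      rw [hH, hH, ← Finset.sum_range_add_sum_Ico β hnm]
    have h1 : ∑ i ∈ Finset.Ico n m, β i ≤ (m - n : ℕ) * β n := by
      calc ∑ i ∈ Finset.Ico n m, β i ≤ ∑ _i ∈ Finset.Ico n m, β n := by
            apply Finset.sum_le_sum
            intro i hi
            exact hβmono (Finset.mem_Ico.mp hi).1
      _ = (m - n : ℕ) * β n := by
            rw [Finset.sum_const, Nat.card_Ico, nsmul_eq_mul]
    have h2 : (n : ℝ) * β n ≤ H n := by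
      rw [hH]
      calc (n : ℝ) * β n = ∑ _i ∈ Finset.range n, β n := by
            rw [Finset.sum_const, Finset.card_range, nsmul_eq_mul]
      _ ≤ ∑ i ∈ Finset.range n, β i := by
            apply Finset.sum_le_sum
            intro i hi
            exact hβmono (le_of_lt (Finset.mem_range.mp hi))
    have hmn : ((m - n : ℕ) : ℝ) = (m : ℝ) - (n : ℝ) := by
      rw [Nat.cast_sub hnm]
    have hnR : (0:ℝ) < (n:ℝ) := by exact_mod_cast hn
    have hmR : (n:ℝ) ≤ (m:ℝ) := by exact_mod_cast hnm
    have hS : (n:ℝ) * (∑ i ∈ Finset.Ico n m, β i) ≤ ((m:ℝ) - (n:ℝ)) * H n := by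
      calc (n:ℝ) * (∑ i ∈ Finset.Ico n m, β i) ≤ (n:ℝ) * (((m - n : ℕ):ℝ) * β n) :=
            mul_le_mul_of_nonneg_left h1 (le_of_lt hnR)
      _ = ((m:ℝ) - (n:ℝ)) * ((n:ℝ) * β n) := by rw [hmn]; ring
      _ ≤ ((m:ℝ) - (n:ℝ)) * H n := mul_le_mul_of_nonneg_left h2 (by linarith)
    rw [hsplit, mul_add]
    linarith
  -- the ratio sequence is bounded by r
  have hrb : ∀ b, ((τ (b+1) : ℝ) / (τ b)) * β (τ b) ≤ r := by
    intro b
    induction b with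
    | zero => exact le_refl _
    | succ k ih => exact le_trans (hratio k) ih
  -- main contraction step lemma: H(τ(b+1)) * β(τ b) ≤ r * H(τ b)
  have hstep : ∀ b, H (τ (b+1)) * β (τ b) ≤ r * H (τ b) := by
    intro b
    have h1 : (τ b : ℝ) * H (τ (b+1)) ≤ (τ (b+1) : ℝ) * H (τ b) :=
      hHratio (τ b) (τ (b+1)) (hτpos b) (hτmono (Nat.le_succ b))
    have h2 : (τ b : ℝ) * (H (τ (b+1)) * β (τ b)) ≤
        (τ b : ℝ) * (((τ (b+1) : ℝ) / (τ b)) * β (τ b) * H (τ b)) := by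
      have : (τ b : ℝ) * (((τ (b+1) : ℝ) / (τ b)) * β (τ b) * H (τ b)) =
          ((τ (b+1) : ℝ) * H (τ b)) * β (τ b) := by
        have hne : (τ b : ℝ) ≠ 0 := ne_of_gt (hτR b)
        field_simp
      rw [this]
      calc (τ b : ℝ) * (H (τ (b+1)) * β (τ b)) = ((τ b : ℝ) * H (τ (b+1))) * β (τ b) := by ring
      _ ≤ ((τ (b+1) : ℝ) * H (τ b)) * β (τ b) :=
          mul_le_mul_of_nonneg_right h1 (hβnonneg _)
    have h3 : H (τ (b+1)) * β (τ b) ≤ ((τ (b+1) : ℝ) / (τ b)) * β (τ b) * H (τ b) :=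
      le_of_mul_le_mul_left h2 (hτR b)
    calc H (τ (b+1)) * β (τ b) ≤ ((τ (b+1) : ℝ) / (τ b)) * β (τ b) * H (τ b) := h3
    _ ≤ r * H (τ b) := mul_le_mul_of_nonneg_right (hrb b) (hHnonneg _)
  have hH0x0 : 0 ≤ H (τ 0) * x (t 0) := mul_nonneg (hHnonneg _) (hx _)
  -- Part 1, reindexed
  have part1' : ∀ k, H (τ (k+1)) * x (t (k+1)) ≤
      r ^ (k+1) * (H (τ 0) * x (t 0)) + H (τ (k+1)) * C := by
    intro k
    induction k with
    | zero =>
      have h1 : H (τ 1) * x (t 1) ≤ H (τ 1) * (β (τ 0) * x (t 0) + γ * w) :=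
        mul_le_mul_of_nonneg_left (hcontr 0) (hHnonneg _)
      have h2 : H (τ 1) * β (τ 0) ≤ r * H (τ 0) := hstep 0
      have h3 : H (τ 1) * (γ * w) ≤ H (τ 1) * C :=
        mul_le_mul_of_nonneg_left hγwC (hHnonneg _)
      have h4 : H (τ 1) * β (τ 0) * x (t 0) ≤ r * H (τ 0) * x (t 0) :=
        mul_le_mul_of_nonneg_right h2 (hx _)
      calc H (τ 1) * x (t 1) ≤ H (τ 1) * β (τ 0) * x (t 0) + H (τ 1) * (γ * w) := by
            rw [mul_add] at h1; linarith [h1]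
      _ ≤ r * H (τ 0) * x (t 0) + H (τ 1) * C := by linarith
      _ = r ^ (0+1) * (H (τ 0) * x (t 0)) + H (τ (0+1)) * C := by ring_nf
    | succ k ih =>
      have Hapos := hHpos (k+1)
      have h1 : H (τ (k+2)) * x (t (k+2)) ≤ H (τ (k+2)) * (β (τ (k+1)) * x (t (k+1)) + γ * w) :=
        mul_le_mul_of_nonneg_left (hcontr (k+1)) (hHnonneg _)
      -- bound the product term: multiply ih by H(τ(k+2)) * β(τ(k+1)) / H(τ(k+1))
      have hcoef : 0 ≤ H (τ (k+2)) * β (τ (k+1)) := mul_nonneg (hHnonneg _) (hβnonneg _)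
      have h2 : H (τ (k+1)) * (H (τ (k+2)) * β (τ (k+1)) * x (t (k+1))) ≤
          H (τ (k+2)) * β (τ (k+1)) * (r ^ (k+1) * (H (τ 0) * x (t 0)) + H (τ (k+1)) * C) := by
        calc H (τ (k+1)) * (H (τ (k+2)) * β (τ (k+1)) * x (t (k+1)))
            = H (τ (k+2)) * β (τ (k+1)) * (H (τ (k+1)) * x (t (k+1))) := by ring
        _ ≤ H (τ (k+2)) * β (τ (k+1)) * (r ^ (k+1) * (H (τ 0) * x (t 0)) + H (τ (k+1)) * C) :=
            mul_le_mul_of_nonneg_left ih hcoef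
      have hAB : H (τ (k+2)) * β (τ (k+1)) ≤ r * H (τ (k+1)) := hstep (k+1)
      have hββ : β (τ (k+1)) ≤ β (τ 1) := hβmono (hτmono (by omega))
      -- bound RHS of h2 by H(τ(k+1)) * (r^(k+2) * H0x0 + H(τ(k+2)) * β(τ 1) * C)
      have h3 : H (τ (k+2)) * β (τ (k+1)) * (r ^ (k+1) * (H (τ 0) * x (t 0)) + H (τ (k+1)) * C) ≤
          H (τ (k+1)) * (r ^ (k+2) * (H (τ 0) * x (t 0)) + H (τ (k+2)) * β (τ 1) * C) := by
        have e1 : H (τ (k+2)) * β (τ (k+1)) * (r ^ (k+1) * (H (τ 0) * x (t 0))) ≤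
            r * H (τ (k+1)) * (r ^ (k+1) * (H (τ 0) * x (t 0))) :=
          mul_le_mul_of_nonneg_right hAB (mul_nonneg (pow_nonneg hr0 _) hH0x0)
        have e2 : H (τ (k+2)) * β (τ (k+1)) * (H (τ (k+1)) * C) ≤
            H (τ (k+2)) * β (τ 1) * (H (τ (k+1)) * C) := by
          apply mul_le_mul_of_nonneg_right _ (mul_nonneg (hHnonneg _) hCnonneg)
          exact mul_le_mul_of_nonneg_left hββ (hHnonneg _)
        have e3 : r * H (τ (k+1)) * (r ^ (k+1) * (H (τ 0) * x (t 0))) =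
            H (τ (k+1)) * (r ^ (k+2) * (H (τ 0) * x (t 0))) := by ring
        nlinarith [e1, e2]
      have h4 : H (τ (k+2)) * β (τ (k+1)) * x (t (k+1)) ≤
          r ^ (k+2) * (H (τ 0) * x (t 0)) + H (τ (k+2)) * β (τ 1) * C := by
        have := le_trans h2 h3
        have h5 : H (τ (k+1)) * (H (τ (k+2)) * β (τ (k+1)) * x (t (k+1))) ≤
            H (τ (k+1)) * (r ^ (k+2) * (H (τ 0) * x (t 0)) + H (τ (k+2)) * β (τ 1) * C) := this
        exact le_of_mul_le_mul_left h5 Hapos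
      have h6 : H (τ (k+2)) * β (τ 1) * C + H (τ (k+2)) * (γ * w) = H (τ (k+2)) * C := by
        have : H (τ (k+2)) * β (τ 1) * C + H (τ (k+2)) * (γ * w) =
            H (τ (k+2)) * (β (τ 1) * C + γ * w) := by ring
        rw [this, hCeq]
      calc H (τ (k+2)) * x (t (k+2))
          ≤ H (τ (k+2)) * β (τ (k+1)) * x (t (k+1)) + H (τ (k+2)) * (γ * w) := by
            rw [mul_add] at h1; linarith [h1]
      _ ≤ r ^ (k+2) * (H (τ 0) * x (t 0)) + H (τ (k+2)) * β (τ 1) * C + H (τ (k+2)) * (γ * w) := by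
            linarith [h4]
      _ = r ^ (k+2) * (H (τ 0) * x (t 0)) + H (τ (k+2)) * C := by rw [add_assoc, h6]
  have part1 : ∀ b, 1 ≤ b → H (τ b) * x (t b) ≤
      r ^ b * (H (τ 0) * x (t 0)) + H (τ b) * C := by
    intro b hb
    obtain ⟨k, rfl⟩ := Nat.exists_eq_add_of_le hb
    simpa [add_comm] using part1' k
  refine ⟨part1, ?_⟩
  -- Part 2
  have hgeom : ∀ n : ℕ, (∑ i ∈ Finset.range n, r ^ i) ≤ 1 / (1 - r) := by
    intro n
    have h1r : 0 < 1 - r := by linarith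
    rw [le_div_iff₀ h1r]
    have hg := geom_sum_mul r n
    have hrn : 0 ≤ r ^ n := pow_nonneg hr0 n
    have heq : (∑ i ∈ Finset.range n, r ^ i) * (1 - r) = 1 - r ^ n := by
      linear_combination -hg
    rw [heq]; linarith
  intro B
  rcases Nat.eq_zero_or_pos B with hB | hB
  · subst hB
    simp only [Finset.range_zero, Finset.sum_empty]
    have : Finset.Icc 1 (0 - 1) = (∅ : Finset ℕ) := by decide
    rw [this]
    simp only [Finset.sum_empty, mul_zero, add_zero]
    exact div_nonneg hH0x0 (by linarith)
  · obtain ⟨n, rfl⟩ : ∃ n, B = n + 1 := ⟨B - 1, by omega⟩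
    have hIcc : ∀ f : ℕ → ℝ, ∑ b ∈ Finset.Icc 1 (n + 1 - 1), f b =
        ∑ i ∈ Finset.range n, f (i + 1) := by
      intro f
      have : n + 1 - 1 = n := rfl
      rw [this, ← Finset.Ico_add_one_right_eq_Icc, Finset.sum_Ico_eq_sum_range]
      simp [add_comm]
    rw [hIcc]
    have hsum : ∑ b ∈ Finset.range (n+1), H (τ b) * x (t b) ≤
        (∑ i ∈ Finset.range (n+1), r ^ i) * (H (τ 0) * x (t 0)) +
          C * ∑ i ∈ Finset.range n, H (τ (i+1)) := by
      rw [Finset.sum_range_succ' (fun b => H (τ b) * x (t b)) n,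
          Finset.sum_range_succ' (fun i => r ^ i) n]
      have hterms : ∑ i ∈ Finset.range n, H (τ (i+1)) * x (t (i+1)) ≤
          ∑ i ∈ Finset.range n, (r ^ (i+1) * (H (τ 0) * x (t 0)) + H (τ (i+1)) * C) :=
        Finset.sum_le_sum (fun i _ => part1 (i+1) (by omega))
      rw [Finset.sum_add_distrib] at hterms
      have e1 : ∑ i ∈ Finset.range n, r ^ (i+1) * (H (τ 0) * x (t 0)) =
          (∑ i ∈ Finset.range n, r ^ (i+1)) * (H (τ 0) * x (t 0)) := by
        rw [Finset.sum_mul]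
      have e2 : ∑ i ∈ Finset.range n, H (τ (i+1)) * C = C * ∑ i ∈ Finset.range n, H (τ (i+1)) := by
        rw [Finset.mul_sum]; congr 1; ext i; ring
      rw [e1, e2] at hterms
      have : (r : ℝ) ^ 0 * (H (τ 0) * x (t 0)) = H (τ 0) * x (t 0) := by
        rw [pow_zero, one_mul]
      rw [add_mul, this]
      linarith [hterms]
    have hfinal : (∑ i ∈ Finset.range (n+1), r ^ i) * (H (τ 0) * x (t 0)) ≤
        H (τ 0) * x (t 0) / (1 - r) := by
      rw [div_eq_mul_one_div]
      calc (∑ i ∈ Finset.range (n+1), r ^ i) * (H (τ 0) * x (t 0))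
          ≤ (1 / (1 - r)) * (H (τ 0) * x (t 0)) :=
            mul_le_mul_of_nonneg_right (hgeom (n+1)) hH0x0
      _ = H (τ 0) * x (t 0) * (1 / (1 - r)) := by ring
    linarith [hsum, hfinal]
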